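/- The Ramsey number of the star S_n equals 2n-1 when n is even and 2n when n is odd (for n ≥ 1). -/

import Mathlib

open SimpleGraph

/-- The graph of edges of color `b` in the 2-coloring `c` of a complete graph. -/
def colorGraph {V : Type*} (c : Sym2 V → Bool) (b : Bool) : SimpleGraph V :=
  SimpleGraph.fromRel (fun u v => c s(u, v) = b)

/-- `G` occurs as a (not nec. induced) subgraph of `H`. -/
def ContainsCopy {V W : Type*} (G : SimpleGraph V) (H : SimpleGraph W) : Prop :=
  ∃ f : V → W, Function.Injective f ∧ ∀ ⦃u v : V⦄, G.Adj u v → H.Adj (f u) (f v)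

/-- The coloring `c` contains a monochromatic copy of `G`. -/
def HasMonoCopy {V W : Type*} (G : SimpleGraph V) (c : Sym2 W → Bool) : Prop :=
  ∃ b : Bool, ContainsCopy G (colorGraph c b)

/-- The (diagonal) Ramsey number of a graph `G`. -/
noncomputable def ramseyNumber {V : Type*} (G : SimpleGraph V) : ℕ :=
  sInf {r : ℕ | ∀ c : Sym2 (Fin r) → Bool, HasMonoCopy G c}

/-- The star `S n = K_{1,n}`: center `0`, `n` leaves. -/
def starGraph (n : ℕ) : SimpleGraph (Fin (n + 1)) :=
  SimpleGraph.fromRel (fun u v => u = 0)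

/-- The bistar `B(m,n)`: adjacent centers `inl 0`, `inl 1`, with `m` resp. `n` leaves. -/
def bistar (m n : ℕ) : SimpleGraph (Fin 2 ⊕ Fin m ⊕ Fin n) :=
  SimpleGraph.fromRel (fun u v =>
    (u = Sum.inl 0 ∧ v = Sum.inl 1) ∨
    (u = Sum.inl 0 ∧ ∃ i, v = Sum.inr (Sum.inl i)) ∨
    (u = Sum.inl 1 ∧ ∃ j, v = Sum.inr (Sum.inr j)))

lemma colorGraph_adj {V : Type*} (c : Sym2 V → Bool) (b : Bool) (u v : V) :
    (colorGraph c b).Adj u v ↔ u ≠ v ∧ c s(u, v) = b := by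
  unfold colorGraph
  rw [SimpleGraph.fromRel_adj]
  constructor
  · rintro ⟨h, h2 | h2⟩
    · exact ⟨h, h2⟩
    · exact ⟨h, by rwa [Sym2.eq_swap]⟩
  · rintro ⟨h, h2⟩; exact ⟨h, Or.inl h2⟩

instance {V : Type*} [DecidableEq V] (c : Sym2 V → Bool) (b : Bool) :
    DecidableRel (colorGraph c b).Adj :=
  fun u v => decidable_of_iff _ (colorGraph_adj c b u v).symm

lemma containsCopy_star_iff {W : Type*} [Fintype W] [DecidableEq W] (n : ℕ)
    (H : SimpleGraph W) [DecidableRel H.Adj] :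
    ContainsCopy (_root_.starGraph n) H ↔ ∃ v, n ≤ H.degree v := by
  constructor
  · rintro ⟨f, hinj, hadj⟩
    refine ⟨f 0, ?_⟩
    have h1 : ∀ i : Fin n, f i.succ ∈ H.neighborFinset (f 0) := by
      intro i
      rw [SimpleGraph.mem_neighborFinset]
      apply hadj
      rw [_root_.starGraph, SimpleGraph.fromRel_adj]
      exact ⟨(Fin.succ_ne_zero i).symm, Or.inl rfl⟩
    calc n = (Finset.univ : Finset (Fin n)).card := by simp
    _ ≤ (H.neighborFinset (f 0)).card :=
        Finset.card_le_card_of_injOn (fun i => f i.succ) (fun i _ => h1 i)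
          (fun i _ j _ hij => Fin.succ_injective _ (hinj hij))
    _ = H.degree (f 0) := rfl
  · rintro ⟨v, hv⟩
    obtain ⟨t, ht, htc⟩ := Finset.exists_subset_card_eq (show n ≤ (H.neighborFinset v).card from hv)
    have e : Fin n ≃ t := (Fintype.equivFinOfCardEq (by rw [Fintype.card_coe, htc])).symm
    have hmem : ∀ i : Fin n, H.Adj v (e i : W) := by
      intro i
      have := ht (e i).2
      rwa [SimpleGraph.mem_neighborFinset] at this
    refine ⟨Fin.cases v (fun i => (e i : W)), ?_, ?_⟩
    · intro a b hab
      induction a using Fin.cases with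
      | zero =>
        induction b using Fin.cases with
        | zero => rfl
        | succ j => exact absurd (hmem j).symm (by simp only [Fin.cases_zero, Fin.cases_succ] at hab; rw [← hab]; exact fun h => H.irrefl h)
      | succ i =>
        induction b using Fin.cases with
        | zero => exact absurd (hmem i) (by simp only [Fin.cases_zero, Fin.cases_succ] at hab; rw [hab]; exact fun h => H.irrefl h)
        | succ j =>
          simp only [Fin.cases_succ] at hab
          have := e.injective (Subtype.coe_injective hab)
          rw [this]
    · intro u w huw
      rw [_root_.starGraph, SimpleGraph.fromRel_adj] at huw
      obtain ⟨hne, h0 | h0⟩ := huw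
      · subst h0
        obtain ⟨j, rfl⟩ := Fin.exists_succ_eq_of_ne_zero (Ne.symm hne)
        simpa using hmem j
      · subst h0
        obtain ⟨j, rfl⟩ := Fin.exists_succ_eq_of_ne_zero hne
        simpa using (hmem j).symm

lemma color_degree_sum {V : Type*} [Fintype V] [DecidableEq V] (c : Sym2 V → Bool) (v : V) :
    (colorGraph c true).degree v + (colorGraph c false).degree v = Fintype.card V - 1 := by
  have hdeg : (colorGraph c false).degree v = (colorGraph c true)ᶜ.degree v := by
    rw [SimpleGraph.degree, SimpleGraph.degree]
    congr 1
    ext w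
    simp only [SimpleGraph.mem_neighborFinset, colorGraph_adj, SimpleGraph.compl_adj]
    constructor
    · rintro ⟨h1, h2⟩
      exact ⟨h1, fun h3 => by rw [h3.2] at h2; exact Bool.noConfusion h2⟩
    · rintro ⟨h1, h2⟩
      refine ⟨h1, ?_⟩
      by_contra h3
      exact h2 ⟨h1, by revert h3; cases c s(v, w) <;> simp⟩
  have hlt : (colorGraph c true).degree v < Fintype.card V :=
    SimpleGraph.degree_lt_card_verts v
  rw [hdeg, SimpleGraph.degree_compl]
  omega

lemma star_upper (n : ℕ) (hn : 1 ≤ n) (m : ℕ) (hm : m = if Even n then 2*n-1 else 2*n)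
    (c : Sym2 (Fin m) → Bool) : HasMonoCopy (_root_.starGraph n) c := by
  have hm1 : 1 ≤ m := by
    rcases Nat.even_or_odd n with he | ho
    · obtain ⟨t, ht⟩ := he; rw [hm, if_pos ⟨t, ht⟩]; omega
    · rw [hm, if_neg (Nat.not_even_iff_odd.mpr ho)]; omega
  by_contra hcon
  have hdeg : ∀ (b : Bool) (v : Fin m), (colorGraph c b).degree v < n := by
    intro b v
    by_contra h2
    exact hcon ⟨b, (containsCopy_star_iff n _).mpr ⟨v, by omega⟩⟩
  have hsum : ∀ v : Fin m, (colorGraph c true).degree v + (colorGraph c false).degree v = m - 1 := by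
    intro v; rw [color_degree_sum]; rw [Fintype.card_fin]
  by_cases he : Even n
  · obtain ⟨t, ht⟩ := he
    have hm' : m = 2*n-1 := by rw [hm, if_pos ⟨t, ht⟩]
    obtain ⟨s, hs⟩ : ∃ s, t = s + 1 := ⟨t - 1, by omega⟩
    have hreg : ∀ v : Fin m, (colorGraph c true).degree v = n - 1 := by
      intro v; have := hdeg true v; have := hdeg false v; have := hsum v; omega
    have hhs := SimpleGraph.sum_degrees_eq_twice_card_edges (colorGraph c true)
    rw [Finset.sum_congr rfl (fun v _ => hreg v), Finset.sum_const, Finset.card_univ,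
      Fintype.card_fin, smul_eq_mul] at hhs
    have hm2 : m = 4*s+3 := by omega
    have hn2 : n - 1 = 2*s+1 := by omega
    obtain ⟨a, ha⟩ : ∃ a, (4*s+3)*(2*s+1) = 2*a+1 := ⟨4*s*s+5*s+1, by ring⟩
    have h5 : m * (n - 1) = (4*s+3)*(2*s+1) := by rw [hm2, hn2]
    have h6 : 2*a+1 = 2 * (colorGraph c true).edgeFinset.card := by rw [← ha, ← h5]; exact hhs
    omega
  · have hm' : m = 2*n := by rw [hm, if_neg he]
    have v0 : Fin m := ⟨0, by omega⟩
    have := hsum v0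
    have := hdeg true v0
    have := hdeg false v0
    omega

lemma star_lower (n : ℕ) (hn : 1 ≤ n) (m : ℕ) (hm : m = if Even n then 2*n-2 else 2*n-1) :
    ∃ c : Sym2 (ZMod m) → Bool, ¬ HasMonoCopy (_root_.starGraph n) c := by
  have hpar : (∃ t, n = t + t ∧ m = 2*n-2) ∨ (∃ t, n = 2*t+1 ∧ m = 2*n-1) := by
    rcases Nat.even_or_odd n with he | ho
    · obtain ⟨t, ht⟩ := he; exact Or.inl ⟨t, ht, by rw [hm, if_pos ⟨t, ht⟩]⟩
    · obtain ⟨t, ht⟩ := ho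
      exact Or.inr ⟨t, ht, by rw [hm, if_neg (Nat.not_even_iff_odd.mpr ⟨t, ht⟩)]⟩
  have hm1 : 1 ≤ m := by rcases hpar with ⟨t, h1, h2⟩ | ⟨t, h1, h2⟩ <;> omega
  haveI : NeZero m := ⟨by omega⟩
  set h : ℕ := (n - 1) / 2 with hh
  set P : ℕ → Prop := fun j => (1 ≤ j ∧ j ≤ h) ∨ 2*j = m with hP
  refine ⟨Sym2.lift ⟨fun u v => decide (P (u-v).val ∨ P (v-u).val),
    fun u v => by rw [decide_eq_decide]; exact or_comm⟩, ?_⟩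
  rintro ⟨b, hcopy⟩
  rw [containsCopy_star_iff] at hcopy
  obtain ⟨v, hv⟩ := hcopy
  set c : Sym2 (ZMod m) → Bool := Sym2.lift ⟨fun u v => decide (P (u-v).val ∨ P (v-u).val),
    fun u v => by rw [decide_eq_decide]; exact or_comm⟩ with hc
  have hkey : ∀ u w : ZMod m, c s(u, w) = true ↔ (P (u-w).val ∨ P (w-u).val) := by
    intro u w
    rw [hc, Sym2.lift_mk]
    simp
  -- basic val facts
  have hval : ∀ u : ZMod m, u ≠ v → 1 ≤ (u - v).val ∧ (u - v).val ≤ m - 1 ∧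
      (v - u).val = m - (u - v).val := by
    intro u hu
    have hne : u - v ≠ 0 := sub_ne_zero.mpr hu
    have h1 : (u - v).val ≠ 0 := fun hz => hne ((ZMod.val_eq_zero _).mp hz)
    have h2 : (u - v).val < m := ZMod.val_lt _
    have h3 : v - u = -(u - v) := by ring
    rw [h3, ZMod.neg_val, if_neg hne]
    omega
  set target : Finset ℕ :=
    if b then (Finset.Icc 1 h ∪ Finset.Icc (m-h) (m-1) ∪ (if Even n then {n-1} else ∅))
    else Finset.Icc (h+1) (m-1-h) with htarget
  have hmaps : ∀ u ∈ (colorGraph c b).neighborFinset v, (u - v).val ∈ target := by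
    intro u hu
    rw [SimpleGraph.mem_neighborFinset, colorGraph_adj] at hu
    obtain ⟨hne, hcb⟩ := hu
    have hne' : u ≠ v := Ne.symm hne
    obtain ⟨hv1, hv2, hv3⟩ := hval u hne'
    have hvu : s(v, u) = s(u, v) := Sym2.eq_swap
    rw [hvu] at hcb
    cases b with
    | true =>
      rw [hkey] at hcb
      rw [htarget, if_pos rfl]
      simp only [Finset.mem_union, Finset.mem_Icc, Finset.mem_singleton, hP, hv3] at hcb ⊢
      rcases hpar with ⟨t, h1, h2⟩ | ⟨t, h1, h2⟩
      · rw [if_pos ⟨t, h1⟩]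
        simp only [Finset.mem_singleton]
        omega
      · rw [if_neg (Nat.not_even_iff_odd.mpr ⟨t, h1⟩)]
        simp only [Finset.notMem_empty]
        omega
    | false =>
      have hcb' : ¬ (P (u-v).val ∨ P (v-u).val) := by
        intro hq
        rw [← hkey u v] at hq
        rw [hcb] at hq
        exact Bool.noConfusion hq
      rw [htarget, if_neg (by simp)]
      simp only [hP, hv3, not_or, not_and, not_le] at hcb'
      simp only [Finset.mem_Icc]
      omega
  have hinj : Set.InjOn (fun u => (u - v).val) ((colorGraph c b).neighborFinset v : Set (ZMod m)) := by
    intro a _ b' _ hab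
    have := ZMod.val_injective m hab
    exact sub_left_injective this
  have hcard : (colorGraph c b).degree v ≤ target.card :=
    Finset.card_le_card_of_injOn _ (fun u hu => hmaps u hu) hinj
  have htc : target.card ≤ n - 1 := by
    rw [htarget]
    cases b with
    | true =>
      rw [if_pos rfl]
      refine le_trans (Finset.card_union_le _ _) ?_
      have h1 := Finset.card_union_le (Finset.Icc 1 h) (Finset.Icc (m-h) (m-1))
      have h2 : (Finset.Icc 1 h).card = h := by rw [Nat.card_Icc]; omega
      have h3 : (Finset.Icc (m-h) (m-1)).card = (m-1) + 1 - (m-h) := by rw [Nat.card_Icc]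
      rcases hpar with ⟨t, ht1, ht2⟩ | ⟨t, ht1, ht2⟩
      · rw [if_pos ⟨t, ht1⟩]
        simp only [Finset.card_singleton]
        omega
      · rw [if_neg (Nat.not_even_iff_odd.mpr ⟨t, ht1⟩)]
        simp only [Finset.card_empty]
        omega
    | false =>
      rw [if_neg (by simp), Nat.card_Icc]
      rcases hpar with ⟨t, ht1, ht2⟩ | ⟨t, ht1, ht2⟩ <;> omega
  omega

lemma restrict_coloring (n s : ℕ) {W : Type*} (g : Fin s ↪ W) (c : Sym2 W → Bool)
    (hc : ¬ HasMonoCopy (_root_.starGraph n) c) :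
    ∃ c' : Sym2 (Fin s) → Bool, ¬ HasMonoCopy (_root_.starGraph n) c' := by
  refine ⟨fun e => c (e.map g), ?_⟩
  rintro ⟨b, f, hinj, hadj⟩
  refine hc ⟨b, g ∘ f, g.injective.comp hinj, ?_⟩
  intro u w huw
  have := hadj huw
  rw [colorGraph_adj] at this ⊢
  obtain ⟨h1, h2⟩ := this
  refine ⟨fun hq => h1 (g.injective hq), ?_⟩
  rw [← h2, Sym2.map_pair_eq]; rfl

theorem star_ramsey (n : ℕ) (hn : 1 ≤ n) :
    ramseyNumber (_root_.starGraph n) = if Even n then 2 * n - 1 else 2 * n := by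
  set r := if Even n then 2 * n - 1 else 2 * n with hr
  have hmem : r ∈ {r : ℕ | ∀ c : Sym2 (Fin r) → Bool, HasMonoCopy (_root_.starGraph n) c} :=
    fun c => star_upper n hn r hr c
  refine le_antisymm (Nat.sInf_le hmem) (le_csInf ⟨r, hmem⟩ ?_)
  intro s hs
  by_contra hlt
  push_neg at hlt
  -- s < r; build a bad coloring on Fin s
  set m := if Even n then 2*n-2 else 2*n-1 with hm
  have hm1 : 1 ≤ m := by
    rcases Nat.even_or_odd n with he | ho
    · obtain ⟨t, ht⟩ := he; rw [hm, if_pos ⟨t, ht⟩]; omega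
    · rw [hm, if_neg (Nat.not_even_iff_odd.mpr ho)]; omega
  haveI : NeZero m := ⟨by omega⟩
  have hsm : s ≤ m := by
    rcases Nat.even_or_odd n with he | ho
    · obtain ⟨t, ht⟩ := he
      rw [hm, if_pos ⟨t, ht⟩]
      rw [hr, if_pos ⟨t, ht⟩] at hlt
      omega
    · have ho' := Nat.not_even_iff_odd.mpr ho
      rw [hm, if_neg ho']
      rw [hr, if_neg ho'] at hlt
      omega
  obtain ⟨c, hc⟩ := star_lower n hn m hm
  have e : Fin m ≃ ZMod m := (Fintype.equivFinOfCardEq (ZMod.card m)).symm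
  have g : Fin s ↪ ZMod m := (Fin.castLEEmb hsm).trans e.toEmbedding
  obtain ⟨c', hc'⟩ := restrict_coloring n s g c hc
  exact hc' (hs c')
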